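/- arXiv:1108.6101 — 2 statements merged into one kernel-verified Lean document; each statement's English description precedes it below -/
import Mathlib

section
/- Let (g1, g2) be a matched pair of Lie algebras and a = g1 ⋈ g2 their double crossed sum. A vector space M with linear maps ∇1: M → g1 ⊗ M and ∇2: M → g2 ⊗ M carries an a-comodule structure via m ↦ (∇1(m) + ∇2(m)) ∈ a ⊗ M if and only if ∇1 is a g1-comodule structure, ∇2 is a g2-comodule structure, and the mixed compatibility m[−1] ⊗ m[0]⟨−1⟩ ⊗ m[0]⟨0⟩ = m⟨0⟩[−1] ⊗ m⟨−1⟩ ⊗ m⟨0⟩[0] holds in g1 ⊗ g2 ⊗ M, where [·] denotes ∇1 and ⟨·⟩ denotes ∇2. -/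
open TensorProduct LinearMap

noncomputable section

/-- Swap the first two legs of `A ⊗ (B ⊗ M)`. -/
def swapHead (k A B M : Type) [Field k] [AddCommGroup A] [Module k A]
    [AddCommGroup B] [Module k B] [AddCommGroup M] [Module k M] :
    A ⊗[k] (B ⊗[k] M) →ₗ[k] B ⊗[k] (A ⊗[k] M) :=
  (TensorProduct.assoc k B A M).toLinearMap ∘ₗ
    (LinearMap.rTensor M (TensorProduct.comm k A B).toLinearMap) ∘ₗ
      (TensorProduct.assoc k A B M).symm.toLinearMap

/-- Left Lie algebra comodule condition. -/
def IsLieComodule {k g M : Type} [Field k] [AddCommGroup g] [Module k g]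
    [AddCommGroup M] [Module k M] (cm : M →ₗ[k] g ⊗[k] M) : Prop :=
  (swapHead k g g M) ∘ₗ (LinearMap.lTensor g cm) ∘ₗ cm = (LinearMap.lTensor g cm) ∘ₗ cm

section Aux

variable {k A B A' B' M X N : Type} [Field k]
  [AddCommGroup A] [Module k A] [AddCommGroup B] [Module k B]
  [AddCommGroup A'] [Module k A'] [AddCommGroup B'] [Module k B']
  [AddCommGroup M] [Module k M] [AddCommGroup X] [Module k X]
  [AddCommGroup N] [Module k N]

lemma swapHead_tmul (a : A) (b : B) (m : M) :
    swapHead k A B M (a ⊗ₜ (b ⊗ₜ m)) = b ⊗ₜ (a ⊗ₜ m) := by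
  simp [swapHead]

lemma swapHead_comp_swapHead :
    swapHead k B A M ∘ₗ swapHead k A B M = LinearMap.id := by
  ext a b m
  simp [swapHead_tmul]

lemma swapHead_natural (f : A →ₗ[k] A') (g : B →ₗ[k] B') :
    swapHead k A' B' M ∘ₗ (rTensor (B' ⊗[k] M) f ∘ₗ lTensor A (rTensor M g))
      = (rTensor (A' ⊗[k] M) g ∘ₗ lTensor B (rTensor M f)) ∘ₗ swapHead k A B M := by
  ext a b m
  simp [swapHead_tmul]

lemma swapHead_natural_comp (f : A →ₗ[k] A') (g : B →ₗ[k] B')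
    (L : N →ₗ[k] A ⊗[k] (B ⊗[k] M)) :
    rTensor (A' ⊗[k] M) g ∘ₗ lTensor B (rTensor M f) ∘ₗ swapHead k A B M ∘ₗ L
      = swapHead k A' B' M ∘ₗ rTensor (B' ⊗[k] M) f ∘ₗ lTensor A (rTensor M g) ∘ₗ L := by
  calc rTensor (A' ⊗[k] M) g ∘ₗ lTensor B (rTensor M f) ∘ₗ swapHead k A B M ∘ₗ L
      = ((rTensor (A' ⊗[k] M) g ∘ₗ lTensor B (rTensor M f)) ∘ₗ swapHead k A B M) ∘ₗ L := rfl
    _ = (swapHead k A' B' M ∘ₗ (rTensor (B' ⊗[k] M) f ∘ₗ lTensor A (rTensor M g))) ∘ₗ L := by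
        rw [← swapHead_natural]
    _ = _ := rfl

lemma comp_helper (n : M →ₗ[k] X ⊗[k] M) (q : X →ₗ[k] A) (r : X →ₗ[k] B)
    (f : M →ₗ[k] A ⊗[k] M) (g : M →ₗ[k] B ⊗[k] M)
    (hq : rTensor M q ∘ₗ n = f) (hr : rTensor M r ∘ₗ n = g) :
    rTensor (B ⊗[k] M) q ∘ₗ lTensor X (rTensor M r) ∘ₗ lTensor X n ∘ₗ n
      = lTensor A g ∘ₗ f := by
  subst hq hr
  have h1 : lTensor X (rTensor M r) ∘ₗ lTensor X n = lTensor X (rTensor M r ∘ₗ n) :=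
    (lTensor_comp X _ _).symm
  have h2 : rTensor (B ⊗[k] M) q ∘ₗ lTensor X (rTensor M r ∘ₗ n)
      = lTensor A (rTensor M r ∘ₗ n) ∘ₗ rTensor M q := by
    rw [rTensor_comp_lTensor, lTensor_comp_rTensor]
  calc rTensor (B ⊗[k] M) q ∘ₗ lTensor X (rTensor M r) ∘ₗ lTensor X n ∘ₗ n
      = (rTensor (B ⊗[k] M) q ∘ₗ lTensor X (rTensor M r ∘ₗ n)) ∘ₗ n := by rw [← h1]; rfl
    _ = (lTensor A (rTensor M r ∘ₗ n) ∘ₗ rTensor M q) ∘ₗ n := by rw [h2]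
    _ = _ := rfl

variable {g₁ g₂ : Type} [AddCommGroup g₁] [Module k g₁] [AddCommGroup g₂] [Module k g₂]

lemma inl_fst_add_inr_snd :
    inl k g₁ g₂ ∘ₗ fst k g₁ g₂ + inr k g₁ g₂ ∘ₗ snd k g₁ g₂ = LinearMap.id := by
  ext x <;> simp

lemma eq_of_rTensor_proj (x y : (g₁ × g₂) ⊗[k] X)
    (h1 : rTensor X (fst k g₁ g₂) x = rTensor X (fst k g₁ g₂) y)
    (h2 : rTensor X (snd k g₁ g₂) x = rTensor X (snd k g₁ g₂) y) : x = y := by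
  have hx : ∀ z : (g₁ × g₂) ⊗[k] X,
      z = rTensor X (inl k g₁ g₂) (rTensor X (fst k g₁ g₂) z)
        + rTensor X (inr k g₁ g₂) (rTensor X (snd k g₁ g₂) z) := by
    intro z
    have := congrArg (fun f => rTensor X f z) (inl_fst_add_inr_snd (k := k) (g₁ := g₁) (g₂ := g₂))
    simpa [rTensor_add, rTensor_comp] using this.symm
  rw [hx x, hx y, h1, h2]

lemma eq_of_lTensor_rTensor_proj (x y : A ⊗[k] ((g₁ × g₂) ⊗[k] M))
    (h1 : lTensor A (rTensor M (fst k g₁ g₂)) x = lTensor A (rTensor M (fst k g₁ g₂)) y)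
    (h2 : lTensor A (rTensor M (snd k g₁ g₂)) x = lTensor A (rTensor M (snd k g₁ g₂)) y) :
    x = y := by
  have hx : ∀ z : A ⊗[k] ((g₁ × g₂) ⊗[k] M),
      z = lTensor A (rTensor M (inl k g₁ g₂)) (lTensor A (rTensor M (fst k g₁ g₂)) z)
        + lTensor A (rTensor M (inr k g₁ g₂)) (lTensor A (rTensor M (snd k g₁ g₂)) z) := by
    intro z
    have h0 : rTensor M (inl k g₁ g₂) ∘ₗ rTensor M (fst k g₁ g₂)
        + rTensor M (inr k g₁ g₂) ∘ₗ rTensor M (snd k g₁ g₂)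
        = (LinearMap.id : (g₁ × g₂) ⊗[k] M →ₗ[k] _) := by
      rw [← rTensor_comp, ← rTensor_comp, ← rTensor_add, inl_fst_add_inr_snd, rTensor_id]
    have := congrArg (fun f => lTensor A f z) h0
    simpa [lTensor_add, lTensor_comp] using this.symm
  rw [hx x, hx y, h1, h2]

lemma main_core {M : Type} [AddCommGroup M] [Module k M]
    (cm₁ : M →ₗ[k] g₁ ⊗[k] M) (cm₂ : M →ₗ[k] g₂ ⊗[k] M) :
    IsLieComodule
      ((LinearMap.rTensor M (LinearMap.inl k g₁ g₂)) ∘ₗ cm₁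
        + (LinearMap.rTensor M (LinearMap.inr k g₁ g₂)) ∘ₗ cm₂)
      ↔
    (IsLieComodule cm₁ ∧ IsLieComodule cm₂ ∧
      (LinearMap.lTensor g₁ cm₂) ∘ₗ cm₁
        = (swapHead k g₂ g₁ M) ∘ₗ (LinearMap.lTensor g₂ cm₁) ∘ₗ cm₂) := by
  set n := (LinearMap.rTensor M (LinearMap.inl k g₁ g₂)) ∘ₗ cm₁
        + (LinearMap.rTensor M (LinearMap.inr k g₁ g₂)) ∘ₗ cm₂ with hn
  have hP1 : rTensor M (fst k g₁ g₂) ∘ₗ n = cm₁ := by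
    rw [hn]
    simp only [comp_add, ← comp_assoc, ← rTensor_comp, fst_comp_inl, fst_comp_inr,
      rTensor_id, rTensor_zero, id_comp, zero_comp, add_zero]
  have hP2 : rTensor M (snd k g₁ g₂) ∘ₗ n = cm₂ := by
    rw [hn]
    simp only [comp_add, ← comp_assoc, ← rTensor_comp, snd_comp_inl, snd_comp_inr,
      rTensor_id, rTensor_zero, id_comp, zero_comp, zero_add]
  have hL11 := comp_helper n (fst k g₁ g₂) (fst k g₁ g₂) cm₁ cm₁ hP1 hP1
  have hL12 := comp_helper n (fst k g₁ g₂) (snd k g₁ g₂) cm₁ cm₂ hP1 hP2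
  have hL21 := comp_helper n (snd k g₁ g₂) (fst k g₁ g₂) cm₂ cm₁ hP2 hP1
  have hL22 := comp_helper n (snd k g₁ g₂) (snd k g₁ g₂) cm₂ cm₂ hP2 hP2
  unfold IsLieComodule
  constructor
  · intro h
    refine ⟨?_, ?_, ?_⟩
    · rw [← hL11,
        (swapHead_natural_comp (fst k g₁ g₂) (fst k g₁ g₂) (lTensor (g₁ × g₂) n ∘ₗ n)).symm, h]
    · rw [← hL22,
        (swapHead_natural_comp (snd k g₁ g₂) (snd k g₁ g₂) (lTensor (g₁ × g₂) n ∘ₗ n)).symm, h]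
    · rw [← hL12, ← hL21,
        ← swapHead_natural_comp (snd k g₁ g₂) (fst k g₁ g₂) (lTensor (g₁ × g₂) n ∘ₗ n), h]
  · rintro ⟨hc1, hc2, hmix⟩
    have hs11 : rTensor (g₁ ⊗[k] M) (fst k g₁ g₂) ∘ₗ lTensor (g₁ × g₂) (rTensor M (fst k g₁ g₂))
        ∘ₗ swapHead k (g₁ × g₂) (g₁ × g₂) M ∘ₗ lTensor (g₁ × g₂) n ∘ₗ n
        = rTensor (g₁ ⊗[k] M) (fst k g₁ g₂) ∘ₗ lTensor (g₁ × g₂) (rTensor M (fst k g₁ g₂))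
          ∘ₗ lTensor (g₁ × g₂) n ∘ₗ n := by
      rw [swapHead_natural_comp, hL11, hc1]
    have hs22 : rTensor (g₂ ⊗[k] M) (snd k g₁ g₂) ∘ₗ lTensor (g₁ × g₂) (rTensor M (snd k g₁ g₂))
        ∘ₗ swapHead k (g₁ × g₂) (g₁ × g₂) M ∘ₗ lTensor (g₁ × g₂) n ∘ₗ n
        = rTensor (g₂ ⊗[k] M) (snd k g₁ g₂) ∘ₗ lTensor (g₁ × g₂) (rTensor M (snd k g₁ g₂))
          ∘ₗ lTensor (g₁ × g₂) n ∘ₗ n := by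
      rw [swapHead_natural_comp, hL22, hc2]
    have hs12 : rTensor (g₂ ⊗[k] M) (fst k g₁ g₂) ∘ₗ lTensor (g₁ × g₂) (rTensor M (snd k g₁ g₂))
        ∘ₗ swapHead k (g₁ × g₂) (g₁ × g₂) M ∘ₗ lTensor (g₁ × g₂) n ∘ₗ n
        = rTensor (g₂ ⊗[k] M) (fst k g₁ g₂) ∘ₗ lTensor (g₁ × g₂) (rTensor M (snd k g₁ g₂))
          ∘ₗ lTensor (g₁ × g₂) n ∘ₗ n := by
      rw [swapHead_natural_comp, hL21, hL12, hmix]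
    have hs21 : rTensor (g₁ ⊗[k] M) (snd k g₁ g₂) ∘ₗ lTensor (g₁ × g₂) (rTensor M (fst k g₁ g₂))
        ∘ₗ swapHead k (g₁ × g₂) (g₁ × g₂) M ∘ₗ lTensor (g₁ × g₂) n ∘ₗ n
        = rTensor (g₁ ⊗[k] M) (snd k g₁ g₂) ∘ₗ lTensor (g₁ × g₂) (rTensor M (fst k g₁ g₂))
          ∘ₗ lTensor (g₁ × g₂) n ∘ₗ n := by
      rw [swapHead_natural_comp, hL12, hL21, hmix]
      calc swapHead k g₁ g₂ M ∘ₗ swapHead k g₂ g₁ M ∘ₗ lTensor g₂ cm₁ ∘ₗ cm₂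
          = (swapHead k g₁ g₂ M ∘ₗ swapHead k g₂ g₁ M) ∘ₗ lTensor g₂ cm₁ ∘ₗ cm₂ := rfl
        _ = lTensor g₂ cm₁ ∘ₗ cm₂ := by rw [swapHead_comp_swapHead, id_comp]
    -- now promote the four `hs` to the full equality via joint injectivity
    apply LinearMap.ext; intro m
    apply eq_of_lTensor_rTensor_proj
    · apply eq_of_rTensor_proj
      · exact DFunLike.congr_fun hs11 m
      · exact DFunLike.congr_fun hs21 m
    · apply eq_of_rTensor_proj
      · exact DFunLike.congr_fun hs12 m
      · exact DFunLike.congr_fun hs22 m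
end Aux

theorem comodule_over_double_crossed_sum_iff
    {k : Type} [Field k] [CharZero k]
    {g₁ g₂ : Type} [LieRing g₁] [LieAlgebra k g₁] [LieRing g₂] [LieAlgebra k g₂]
    -- matched pair data (the comodule conditions do not involve the brackets,
    -- but `(g₁, g₂)` is a matched pair with double crossed sum `a = g₁ × g₂`)
    (tl : g₂ →ₗ[k] g₁ →ₗ[k] g₂) (tr : g₂ →ₗ[k] g₁ →ₗ[k] g₁)
    (h1 : ∀ (ζ ξ : g₂) (X : g₁), tr ⁅ζ, ξ⁆ X = tr ζ (tr ξ X) - tr ξ (tr ζ X))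
    (h2 : ∀ (ζ : g₂) (X Y : g₁), tl ζ ⁅X, Y⁆ = tl (tl ζ X) Y - tl (tl ζ Y) X)
    (h3 : ∀ (ζ : g₂) (X Y : g₁),
      tr ζ ⁅X, Y⁆ = ⁅tr ζ X, Y⁆ + ⁅X, tr ζ Y⁆ + tr (tl ζ X) Y - tr (tl ζ Y) X)
    (h4 : ∀ (ζ ξ : g₂) (X : g₁),
      tl ⁅ζ, ξ⁆ X = ⁅tl ζ X, ξ⁆ + ⁅ζ, tl ξ X⁆ + tl ζ (tr ξ X) - tl ξ (tr ζ X))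
    {M : Type} [AddCommGroup M] [Module k M]
    (cm₁ : M →ₗ[k] g₁ ⊗[k] M) (cm₂ : M →ₗ[k] g₂ ⊗[k] M) :
    -- the combined map is an `a = g₁ ⋈ g₂` comodule structure iff ...
    IsLieComodule
      ((LinearMap.rTensor M (LinearMap.inl k g₁ g₂)) ∘ₗ cm₁
        + (LinearMap.rTensor M (LinearMap.inr k g₁ g₂)) ∘ₗ cm₂)
      ↔
    (IsLieComodule cm₁ ∧ IsLieComodule cm₂ ∧
      -- mixed compatibility in `g₁ ⊗ (g₂ ⊗ M)`
      (LinearMap.lTensor g₁ cm₂) ∘ₗ cm₁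
        = (swapHead k g₂ g₁ M) ∘ₗ (LinearMap.lTensor g₂ cm₁) ∘ₗ cm₂) :=
  main_core cm₁ cm₂

end
end

section
/- Let a = g1 ⋈ g2 be a double crossed sum of Lie algebras and M a left a-comodule, with induced g1-coaction ∇1 = (p1 ⊗ id)∘∇_a and g2-coaction ∇2 = (p2 ⊗ id)∘∇_a. Then ∇_a is locally conilpotent if and only if both ∇1 and ∇2 are locally conilpotent. -/
/-!
STATEMENT 9: Let `a = g₁ ⋈ g₂` be a double crossed sum of Lie algebras (underlying
vector space `g₁ × g₂`) and `M` a left `a`-comodule, with induced `g₁`- and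
`g₂`-coactions obtained by projecting. Then the `a`-coaction is locally conilpotent
if and only if both induced coactions are locally conilpotent.  (Local conilpotency
of a coaction `∇ : M → h ⊗ M` is expressed by: for each `m` there is `n` such that
every `n`-fold iteration of the component operators `(φ ⊗ id) ∘ ∇`, `φ ∈ h*`,
annihilates `m`; over a field this is equivalent to the vanishing of `∇ⁿ(m)`.)
-/

open TensorProduct LinearMap

noncomputable section

/-- The component operator `(φ ⊗ id) ∘ ∇ : M → M` of a coaction, for `φ ∈ h*`. -/
def coactComp {k h M : Type} [Field k] [AddCommGroup h] [Module k h]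
    [AddCommGroup M] [Module k M] (cm : M →ₗ[k] h ⊗[k] M)
    (φ : Module.Dual k h) : M →ₗ[k] M :=
  (TensorProduct.lid k M).toLinearMap ∘ₗ (LinearMap.rTensor M φ) ∘ₗ cm

/-- Local conilpotency of a Lie algebra coaction. -/
def LocallyConilpotent {k h M : Type} [Field k] [AddCommGroup h] [Module k h]
    [AddCommGroup M] [Module k M] (cm : M →ₗ[k] h ⊗[k] M) : Prop :=
  ∀ m : M, ∃ n : ℕ, ∀ φs : List (Module.Dual k h), φs.length = n →
    φs.foldr (fun φ (x : M) => coactComp cm φ x) m = 0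

section Aux

variable {k h h' M : Type} [Field k] [AddCommGroup h] [Module k h]
  [AddCommGroup h'] [Module k h'] [AddCommGroup M] [Module k M]

def contr (φ : Module.Dual k h) : h ⊗[k] M →ₗ[k] M :=
  (TensorProduct.lid k M).toLinearMap ∘ₗ LinearMap.rTensor M φ

lemma contr_tmul (φ : Module.Dual k h) (a : h) (m : M) :
    contr (M := M) φ (a ⊗ₜ m) = φ a • m := by
  simp [contr]

lemma coactComp_eq (cm : M →ₗ[k] h ⊗[k] M) (φ : Module.Dual k h) :
    coactComp cm φ = contr φ ∘ₗ cm := rfl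

lemma contr_comp_rTensor (φ : Module.Dual k h) (p : h' →ₗ[k] h) :
    (contr (M := M) φ) ∘ₗ LinearMap.rTensor M p = contr (φ ∘ₗ p) := by
  apply TensorProduct.ext'
  intro a m
  simp [contr_tmul]

lemma coactComp_proj (cm : M →ₗ[k] h' ⊗[k] M) (p : h' →ₗ[k] h) (φ : Module.Dual k h) :
    coactComp ((LinearMap.rTensor M p) ∘ₗ cm) φ = coactComp cm (φ ∘ₗ p) := by
  rw [coactComp_eq, coactComp_eq, ← LinearMap.comp_assoc, contr_comp_rTensor]

lemma contr_add (φ ψ : Module.Dual k h) :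
    contr (M := M) (φ + ψ) = contr φ + contr ψ := by
  apply TensorProduct.ext'
  intro a m
  simp [contr_tmul, add_smul]

lemma coactComp_add (cm : M →ₗ[k] h ⊗[k] M) (φ ψ : Module.Dual k h) (x : M) :
    coactComp cm (φ + ψ) x = coactComp cm φ x + coactComp cm ψ x := by
  simp [coactComp_eq, contr_add]

lemma contr_natural (φ : Module.Dual k h) (f : M →ₗ[k] M) :
    f ∘ₗ contr (M := M) φ = contr φ ∘ₗ LinearMap.lTensor h f := by
  apply TensorProduct.ext'
  intro a m
  simp [contr_tmul]

lemma contr_swap (φ ψ : Module.Dual k h) :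
    (contr (M := M) ψ) ∘ₗ (LinearMap.lTensor h (contr (M := M) φ)) ∘ₗ swapHead k h h M
      = contr φ ∘ₗ LinearMap.lTensor h (contr ψ) := by
  apply TensorProduct.ext'
  intro a x
  induction x using TensorProduct.induction_on with
  | zero => simp
  | tmul b m =>
      simp only [LinearMap.coe_comp, Function.comp_apply, swapHead,
        LinearEquiv.coe_coe, TensorProduct.assoc_symm_tmul, LinearMap.rTensor_tmul,
        TensorProduct.comm_tmul, TensorProduct.assoc_tmul, LinearMap.lTensor_tmul,
        contr_tmul, map_smul]
      rw [smul_comm]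
  | add y z hy hz =>
      simp only [TensorProduct.tmul_add, map_add] at *
      rw [hy, hz]

lemma coactComp_comp (cm : M →ₗ[k] h ⊗[k] M) (φ ψ : Module.Dual k h) :
    coactComp cm φ ∘ₗ coactComp cm ψ
      = contr ψ ∘ₗ LinearMap.lTensor h (contr (M := M) φ) ∘ₗ
          (LinearMap.lTensor h cm ∘ₗ cm) := by
  rw [coactComp_eq, coactComp_eq]
  calc contr φ ∘ₗ cm ∘ₗ contr ψ ∘ₗ cm
      = ((contr φ ∘ₗ cm) ∘ₗ contr ψ) ∘ₗ cm := rfl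
    _ = (contr ψ ∘ₗ LinearMap.lTensor h (contr φ ∘ₗ cm)) ∘ₗ cm := by
          rw [contr_natural]
    _ = _ := by
          rw [LinearMap.lTensor_comp]
          simp only [LinearMap.comp_assoc]

lemma comm_of_comodule (cm : M →ₗ[k] h ⊗[k] M) (hc : IsLieComodule cm)
    (φ ψ : Module.Dual k h) (x : M) :
    coactComp cm φ (coactComp cm ψ x) = coactComp cm ψ (coactComp cm φ x) := by
  have key : coactComp cm φ ∘ₗ coactComp cm ψ = coactComp cm ψ ∘ₗ coactComp cm φ := by
    rw [coactComp_comp, coactComp_comp, ← hc]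
    calc contr ψ ∘ₗ LinearMap.lTensor h (contr (M := M) φ) ∘ₗ
            (swapHead k h h M ∘ₗ LinearMap.lTensor h cm ∘ₗ cm)
        = (contr ψ ∘ₗ LinearMap.lTensor h (contr (M := M) φ) ∘ₗ swapHead k h h M) ∘ₗ
            (LinearMap.lTensor h cm ∘ₗ cm) := by simp only [LinearMap.comp_assoc]
      _ = (contr φ ∘ₗ LinearMap.lTensor h (contr (M := M) ψ)) ∘ₗ
            (LinearMap.lTensor h cm ∘ₗ cm) := by rw [contr_swap]
      _ = _ := by
            rw [hc]
            simp only [LinearMap.comp_assoc]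
  exact DFunLike.congr_fun key x

end Aux

section Main

variable {k : Type} [Field k] {g₁ g₂ : Type}
  [AddCommGroup g₁] [Module k g₁] [AddCommGroup g₂] [Module k g₂]
  {M : Type} [AddCommGroup M] [Module k M]

/-- project a dual of `g₁` to a dual of the sum -/
def df₁ (φ : Module.Dual k g₁) : Module.Dual k (g₁ × g₂) := φ ∘ₗ LinearMap.fst k g₁ g₂
def df₂ (φ : Module.Dual k g₂) : Module.Dual k (g₁ × g₂) := φ ∘ₗ LinearMap.snd k g₁ g₂

lemma dual_decomp (ψ : Module.Dual k (g₁ × g₂)) :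
    ψ = df₁ (ψ ∘ₗ LinearMap.inl k g₁ g₂) + df₂ (ψ ∘ₗ LinearMap.inr k g₁ g₂) := by
  apply LinearMap.ext
  intro p
  simp only [df₁, df₂, LinearMap.add_apply, LinearMap.coe_comp, Function.comp_apply,
    LinearMap.fst_apply, LinearMap.snd_apply, LinearMap.inl_apply, LinearMap.inr_apply]
  rw [← map_add]
  congr 1
  simp

section Folds

variable (cmₐ : M →ₗ[k] (g₁ × g₂) ⊗[k] M) (hcomod : IsLieComodule cmₐ)

lemma fold_comm (hcomod : IsLieComodule cmₐ) :
    ∀ (ds : List (Module.Dual k (g₁ × g₂))) (φ : Module.Dual k (g₁ × g₂)) (x : M),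
      coactComp cmₐ φ (ds.foldr (fun ψ (y : M) => coactComp cmₐ ψ y) x)
        = ds.foldr (fun ψ (y : M) => coactComp cmₐ ψ y) (coactComp cmₐ φ x) := by
  intro ds
  induction ds with
  | nil => intro φ x; rfl
  | cons d rest ih =>
      intro φ x
      simp only [List.foldr_cons]
      rw [comm_of_comodule cmₐ hcomod, ih]

lemma fold_swap (hcomod : IsLieComodule cmₐ) :
    ∀ (ds es : List (Module.Dual k (g₁ × g₂))) (x : M),
      ds.foldr (fun ψ (y : M) => coactComp cmₐ ψ y)
          (es.foldr (fun ψ (y : M) => coactComp cmₐ ψ y) x)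
        = es.foldr (fun ψ (y : M) => coactComp cmₐ ψ y)
            (ds.foldr (fun ψ (y : M) => coactComp cmₐ ψ y) x) := by
  intro ds
  induction ds with
  | nil => intro es x; rfl
  | cons d rest ih =>
      intro es x
      simp only [List.foldr_cons]
      rw [ih, fold_comm cmₐ hcomod]

lemma fold_zero :
    ∀ (ds : List (Module.Dual k (g₁ × g₂))),
      ds.foldr (fun ψ (y : M) => coactComp cmₐ ψ y) 0 = 0 := by
  intro ds
  induction ds with
  | nil => rfl
  | cons d rest ih => simp only [List.foldr_cons, ih, map_zero]

lemma fold_proj₁ :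
    ∀ (φs : List (Module.Dual k g₁)) (x : M),
      φs.foldr (fun φ (y : M) =>
          coactComp ((LinearMap.rTensor M (LinearMap.fst k g₁ g₂)) ∘ₗ cmₐ) φ y) x
        = (φs.map df₁).foldr (fun ψ (y : M) => coactComp cmₐ ψ y) x := by
  intro φs
  induction φs with
  | nil => intro x; rfl
  | cons φ rest ih =>
      intro x
      simp only [List.foldr_cons, List.map_cons]
      rw [ih, coactComp_proj]
      rfl

lemma fold_proj₂ :
    ∀ (φs : List (Module.Dual k g₂)) (x : M),
      φs.foldr (fun φ (y : M) =>
          coactComp ((LinearMap.rTensor M (LinearMap.snd k g₁ g₂)) ∘ₗ cmₐ) φ y) x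
        = (φs.map df₂).foldr (fun ψ (y : M) => coactComp cmₐ ψ y) x := by
  intro φs
  induction φs with
  | nil => intro x; rfl
  | cons φ rest ih =>
      intro x
      simp only [List.foldr_cons, List.map_cons]
      rw [ih, coactComp_proj]
      rfl

end Folds

end Main

theorem locally_conilpotent_iff_components
    {k : Type} [Field k] [CharZero k]
    {g₁ g₂ : Type} [LieRing g₁] [LieAlgebra k g₁] [LieRing g₂] [LieAlgebra k g₂]
    {M : Type} [AddCommGroup M] [Module k M]
    -- a left comodule over `a = g₁ ⋈ g₂`
    (cmₐ : M →ₗ[k] (g₁ × g₂) ⊗[k] M)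
    (hcomod : IsLieComodule cmₐ) :
    LocallyConilpotent cmₐ ↔
      (LocallyConilpotent ((LinearMap.rTensor M (LinearMap.fst k g₁ g₂)) ∘ₗ cmₐ) ∧
       LocallyConilpotent ((LinearMap.rTensor M (LinearMap.snd k g₁ g₂)) ∘ₗ cmₐ)) := by
  constructor
  · intro H
    constructor
    · intro m
      obtain ⟨n, hn⟩ := H m
      refine ⟨n, fun φs hlen => ?_⟩
      rw [fold_proj₁ cmₐ]
      exact hn _ (by simpa using hlen)
    · intro m
      obtain ⟨n, hn⟩ := H m
      refine ⟨n, fun φs hlen => ?_⟩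
      rw [fold_proj₂ cmₐ]
      exact hn _ (by simpa using hlen)
  · rintro ⟨H1, H2⟩ m
    obtain ⟨n₁, h1⟩ := H1 m
    obtain ⟨n₂, h2⟩ := H2 m
    refine ⟨n₁ + n₂, fun ψs hlen => ?_⟩
    -- the span of "sorted" iterated coaction components
    have main : ∀ ψs : List (Module.Dual k (g₁ × g₂)),
        ψs.foldr (fun ψ (x : M) => coactComp cmₐ ψ x) m ∈
          Submodule.span k {x : M | ∃ l₁ : List (Module.Dual k g₁),
            ∃ l₂ : List (Module.Dual k g₂),
            l₁.length + l₂.length = ψs.length ∧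
            x = (l₁.map df₁ ++ l₂.map df₂).foldr
                  (fun ψ (y : M) => coactComp cmₐ ψ y) m} := by
      intro ψs
      induction ψs with
      | nil => exact Submodule.subset_span ⟨[], [], rfl, rfl⟩
      | cons ψ rest ih =>
          simp only [List.foldr_cons]
          have himg : coactComp cmₐ ψ (rest.foldr (fun ψ (x : M) => coactComp cmₐ ψ x) m) ∈
              Submodule.map (coactComp cmₐ ψ) (Submodule.span k
                {x : M | ∃ l₁ : List (Module.Dual k g₁), ∃ l₂ : List (Module.Dual k g₂),
                  l₁.length + l₂.length = rest.length ∧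
                  x = (l₁.map df₁ ++ l₂.map df₂).foldr
                        (fun ψ (y : M) => coactComp cmₐ ψ y) m}) :=
            Submodule.mem_map_of_mem ih
          rw [Submodule.map_span] at himg
          refine Submodule.span_le.2 ?_ himg
          rintro _ ⟨x, ⟨l₁, l₂, hl, rfl⟩, rfl⟩
          set ψ₁ := ψ ∘ₗ LinearMap.inl k g₁ g₂ with hψ₁
          set ψ₂ := ψ ∘ₗ LinearMap.inr k g₁ g₂ with hψ₂
          have hdec : coactComp cmₐ ψ
              ((l₁.map df₁ ++ l₂.map df₂).foldr (fun ψ (y : M) => coactComp cmₐ ψ y) m)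
              = coactComp cmₐ (df₁ ψ₁)
                  ((l₁.map df₁ ++ l₂.map df₂).foldr (fun ψ (y : M) => coactComp cmₐ ψ y) m)
                + coactComp cmₐ (df₂ ψ₂)
                  ((l₁.map df₁ ++ l₂.map df₂).foldr (fun ψ (y : M) => coactComp cmₐ ψ y) m) := by
            rw [dual_decomp ψ, coactComp_add]
          rw [hdec]
          refine Submodule.add_mem _ (Submodule.subset_span ?_) (Submodule.subset_span ?_)
          · refine ⟨ψ₁ :: l₁, l₂, by simpa using by omega, ?_⟩
            simp only [List.map_cons, List.cons_append, List.foldr_cons]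
          · refine ⟨l₁, ψ₂ :: l₂, by simpa using by omega, ?_⟩
            simp only [List.map_cons, List.foldr_append, List.foldr_cons]
            rw [fold_comm cmₐ hcomod]
    have hz : ∀ x ∈ ({x : M | ∃ l₁ : List (Module.Dual k g₁),
            ∃ l₂ : List (Module.Dual k g₂),
            l₁.length + l₂.length = n₁ + n₂ ∧
            x = (l₁.map df₁ ++ l₂.map df₂).foldr
                  (fun ψ (y : M) => coactComp cmₐ ψ y) m} : Set M), x = 0 := by
      rintro _ ⟨l₁, l₂, hl, rfl⟩
      rw [List.foldr_append]
      rcases le_or_gt n₁ l₁.length with hc | hc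
      · rw [fold_swap cmₐ hcomod]
        have hdrop : ((List.drop (l₁.length - n₁) l₁).map df₁).foldr
            (fun ψ (y : M) => coactComp cmₐ ψ y) m = 0 := by
          rw [← fold_proj₁ cmₐ]
          exact h1 _ (by simp; omega)
        have hinner : (l₁.map df₁).foldr (fun ψ (y : M) => coactComp cmₐ ψ y) m = 0 := by
          conv_lhs => rw [← List.take_append_drop (l₁.length - n₁) l₁]
          rw [List.map_append, List.foldr_append, hdrop, fold_zero]
        rw [hinner, fold_zero]
      · have hlen₂ : n₂ ≤ l₂.length := by omega
        have hdrop : ((List.drop (l₂.length - n₂) l₂).map df₂).foldr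
            (fun ψ (y : M) => coactComp cmₐ ψ y) m = 0 := by
          rw [← fold_proj₂ cmₐ]
          exact h2 _ (by simp; omega)
        have hinner : (l₂.map df₂).foldr (fun ψ (y : M) => coactComp cmₐ ψ y) m = 0 := by
          conv_lhs => rw [← List.take_append_drop (l₂.length - n₂) l₂]
          rw [List.map_append, List.foldr_append, hdrop, fold_zero]
        rw [hinner, fold_zero]
    have hm := main ψs
    rw [hlen] at hm
    have : Submodule.span k {x : M | ∃ l₁ : List (Module.Dual k g₁),
            ∃ l₂ : List (Module.Dual k g₂),
            l₁.length + l₂.length = n₁ + n₂ ∧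
            x = (l₁.map df₁ ++ l₂.map df₂).foldr
                  (fun ψ (y : M) => coactComp cmₐ ψ y) m} ≤ ⊥ := by
      rw [Submodule.span_le]
      intro x hx
      simp only [SetLike.mem_coe, Submodule.mem_bot]
      exact hz x hx
    simpa using this hm

end
end
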